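/- For a hypergeometric random variable ξ with parameters (n, pn, k) with 1/6 ≤ p ≤ 1/2, the quantity 1 + P(ξ ≥ k/2)·(1−2p)/p is at most 1 + 6·exp(−1/2)/√k. -/

import Mathlib

open Finset BigOperators

noncomputable section

/-- Hamming distance between two preference vectors over `m` binary issues. -/
def hamming {m : ℕ} (x y : Fin m → Bool) : ℕ :=
  (Finset.univ.filter fun j => x j ≠ y j).card

/-- Social cost of outcome `z` on profile `X`: sum of Hamming distances. -/
def SC {n m : ℕ} (X : Fin n → Fin m → Bool) (z : Fin m → Bool) : ℕ :=
  ∑ i, hamming (X i) z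

/-- Optimal (minimal) social cost over all outcomes. -/
def optCost {n m : ℕ} (X : Fin n → Fin m → Bool) : ℕ :=
  Finset.univ.inf' Finset.univ_nonempty fun z : Fin m → Bool => SC X z

/-- Number of voters preferring alternative 1 (`true`) on issue `j`. -/
def trueCount {n m : ℕ} (X : Fin n → Fin m → Bool) (j : Fin m) : ℕ :=
  (Finset.univ.filter fun i => X i j = true).card

/-- Number of voters preferring alternative 0 (`false`) on issue `j`. -/
def falseCount {n m : ℕ} (X : Fin n → Fin m → Bool) (j : Fin m) : ℕ :=
  (Finset.univ.filter fun i => X i j = false).card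

/-- Expected social cost of `k`-sortition: a uniformly random committee of size `k`
decides each issue by simple majority, ties broken uniformly at random. -/
def sortitionCost (k : ℕ) {n m : ℕ} (X : Fin n → Fin m → Bool) : ℝ :=
  (∑ C ∈ Finset.powersetCard k (Finset.univ : Finset (Fin n)), ∑ j : Fin m,
      (if k < 2 * (C.filter fun i => X i j = true).card then (falseCount X j : ℝ)
       else if 2 * (C.filter fun i => X i j = true).card < k then (trueCount X j : ℝ)
       else (n : ℝ) / 2)) / (n.choose k : ℝ)

/-- Ratio of an (expected) cost to the optimal cost, with the convention `0/0 = 1`. -/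
def ratio (cost : ℝ) (opt : ℕ) : ℝ := if opt = 0 then 1 else cost / (opt : ℝ)

/-- Worst-case approximation ratio of `k`-sortition over profiles with `n` voters, `m` issues. -/
def sortitionAR (n m k : ℕ) : ℝ :=
  ⨆ X : Fin n → Fin m → Bool, ratio (sortitionCost k X) (optCost X)

/-- The set of committee members of `C` closest (in Hamming distance) to voter `i`. -/
def closestSet {n m : ℕ} (X : Fin n → Fin m → Bool) (C : Finset (Fin n)) (i : Fin n) :
    Finset (Fin n) :=
  C.filter fun c => ∀ c' ∈ C, hamming (X i) (X c) ≤ hamming (X i) (X c')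

/-- Weight of committee member `c`: each voter splits one unit of weight equally among
their closest committee members. -/
def wWeight {n m : ℕ} (X : Fin n → Fin m → Bool) (C : Finset (Fin n)) (c : Fin n) : ℝ :=
  ∑ i : Fin n, if c ∈ closestSet X C i then 1 / ((closestSet X C i).card : ℝ) else 0

/-- Expected social cost of the decision of committee `C` under weighted majority
(per issue, ties broken uniformly). -/
def wCost {n m : ℕ} (X : Fin n → Fin m → Bool) (C : Finset (Fin n)) : ℝ :=
  ∑ j : Fin m,
    (if (∑ c ∈ C.filter (fun c => X c j = false), wWeight X C c)
          < (∑ c ∈ C.filter (fun c => X c j = true), wWeight X C c)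
        then (falseCount X j : ℝ)
     else if (∑ c ∈ C.filter (fun c => X c j = true), wWeight X C c)
          < (∑ c ∈ C.filter (fun c => X c j = false), wWeight X C c)
        then (trueCount X j : ℝ)
     else (n : ℝ) / 2)

/-- Expected social cost of weighted `k`-sortition: uniformly random committee of size `k`,
weighted majority vote per issue. -/
def wSortitionCost (k : ℕ) {n m : ℕ} (X : Fin n → Fin m → Bool) : ℝ :=
  (∑ C ∈ Finset.powersetCard k (Finset.univ : Finset (Fin n)), wCost X C) / (n.choose k : ℝ)

/-- Worst-case approximation ratio of weighted `k`-sortition. -/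
def wSortitionAR (n m k : ℕ) : ℝ :=
  ⨆ X : Fin n → Fin m → Bool, ratio (wSortitionCost k X) (optCost X)


/-- Tail probability `P(ξ ≥ t)` for a hypergeometric random variable `ξ` with
parameters `(n, n₁, k)` (number of red balls among `k` draws without replacement
from an urn with `n₁` red balls out of `n`). -/
def hyperTail (n n₁ k : ℕ) (t : ℝ) : ℝ :=
  ∑ q ∈ Finset.range (k + 1), if t ≤ (q : ℝ) then
    ((n₁.choose q * (n - n₁).choose (k - q) : ℕ) : ℝ) / (n.choose k : ℝ) else 0

lemma vand (a b k : ℕ) : ∑ q ∈ range (k+1), a.choose q * b.choose (k-q) = (a+b).choose k := by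
  rw [Nat.add_choose_eq, Finset.Nat.sum_antidiagonal_eq_sum_range_succ_mk]

lemma mul_choose_succ (a r : ℕ) : (r+1) * a.choose (r+1) = a * (a-1).choose r := by
  cases a with
  | zero => simp
  | succ s =>
    have h := Nat.add_one_mul_choose_eq s r
    simp only [Nat.succ_eq_add_one, Nat.add_sub_cancel]
    rw [h]; ring

lemma sumB (a b m : ℕ) : ∑ q ∈ range (m+2), q * (a.choose q * b.choose (m+1-q))
    = a * ((a-1)+b).choose m := by
  rw [Finset.sum_range_succ']
  simp only [Nat.zero_mul, add_zero]
  have : ∀ r ∈ range (m+1), (r+1) * (a.choose (r+1) * b.choose (m+1-(r+1)))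
      = a * ((a-1).choose r * b.choose (m-r)) := by
    intro r hr
    have h1 : m+1-(r+1) = m - r := by omega
    rw [h1, ← mul_assoc, mul_choose_succ, mul_assoc]
  rw [Finset.sum_congr rfl this, ← Finset.mul_sum, vand]

lemma sumC (a b m : ℕ) : ∑ q ∈ range (m+3), q * (q-1) * (a.choose q * b.choose (m+2-q))
    = a * (a-1) * ((a-2)+b).choose m := by
  rw [Finset.sum_range_succ', Finset.sum_range_succ']
  simp only [Nat.zero_mul, Nat.mul_zero, add_zero, Nat.zero_sub, Nat.sub_self]
  have key : ∀ r : ℕ, (r+1+1) * (r+1+1-1) * a.choose (r+1+1) = a * (a-1) * (a-2).choose r := by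
    intro r
    have h1 : (r+1+1-1) = r+1 := by omega
    have h2 := mul_choose_succ a (r+1)
    have h3 := mul_choose_succ (a-1) r
    have h4 : a - 1 - 1 = a - 2 := by omega
    rw [h4] at h3
    calc (r+1+1) * (r+1+1-1) * a.choose (r+1+1)
        = (r+1) * ((r+2) * a.choose (r+2)) := by rw [h1]; ring
      _ = (r+1) * (a * (a-1).choose (r+1)) := by rw [h2]
      _ = a * ((r+1) * (a-1).choose (r+1)) := by ring
      _ = a * ((a-1) * (a-2).choose r) := by rw [h3]
      _ = a * (a-1) * (a-2).choose r := by ring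
  have : ∀ r ∈ range (m+1), (r+1+1) * (r+1+1-1) * (a.choose (r+1+1) * b.choose (m+2-(r+1+1)))
      = a * (a-1) * ((a-2).choose r * b.choose (m-r)) := by
    intro r hr
    have h1 : m+2-(r+1+1) = m - r := by omega
    rw [h1, ← mul_assoc, key, mul_assoc]
  rw [Finset.sum_congr rfl this, ← Finset.mul_sum, vand]


noncomputable def wt (n n₁ k : ℕ) (q : ℕ) : ℝ := ((n₁.choose q * (n - n₁).choose (k - q) : ℕ) : ℝ)

lemma wt_nonneg (n n₁ k q : ℕ) : 0 ≤ wt n n₁ k q := Nat.cast_nonneg _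

lemma S0 (n n₁ k : ℕ) (h2 : n₁ ≤ n) :
    ∑ q ∈ range (k+1), wt n n₁ k q = (n.choose k : ℝ) := by
  have h := vand n₁ (n - n₁) k
  have hn : n₁ + (n - n₁) = n := by omega
  rw [hn] at h
  unfold wt
  rw [← Nat.cast_sum, h]

lemma S1 (n n₁ k : ℕ) (hk : 1 ≤ k) (hkn : k ≤ n) (hn1 : 1 ≤ n₁) (h2 : n₁ ≤ n) :
    ∑ q ∈ range (k+1), (q : ℝ) * wt n n₁ k q
    = (k : ℝ) * ((n₁ : ℝ) / n) * (n.choose k : ℝ) := by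
  obtain ⟨m, rfl⟩ : ∃ m, k = m + 1 := ⟨k - 1, by omega⟩
  have h := sumB n₁ (n - n₁) m
  have hidx : (n₁ - 1) + (n - n₁) = n - 1 := by omega
  rw [hidx] at h
  have h2' := mul_choose_succ n m
  have hcast : ∑ q ∈ range (m+1+1), (q : ℝ) * wt n n₁ (m+1) q
      = ((n₁ * (n-1).choose m : ℕ) : ℝ) := by
    rw [← h]
    push_cast [wt]
    rfl
  rw [hcast]
  have hn0 : (0:ℝ) < n := by exact_mod_cast Nat.cast_pos.mpr (by omega)
  have h2'' : (n : ℝ) * ((n-1).choose m : ℝ) = ((m:ℝ)+1) * (n.choose (m+1) : ℝ) := by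
    have := congrArg (fun x : ℕ => (x : ℝ)) h2'
    push_cast at this
    linarith [this]
  field_simp
  push_cast
  nlinarith [h2'']

lemma S2 (n n₁ k : ℕ) (hk : 2 ≤ k) (hkn : k ≤ n) (hn1 : 1 ≤ n₁) (h2 : n₁ ≤ n) :
    ∑ q ∈ range (k+1), ((q : ℝ)^2 - q) * wt n n₁ k q
    ≤ (k : ℝ) * ((k:ℝ) - 1) * ((n₁ : ℝ) / n)^2 * (n.choose k : ℝ) := by
  obtain ⟨m, rfl⟩ : ∃ m, k = m + 2 := ⟨k - 2, by omega⟩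
  have h := sumC n₁ (n - n₁) m
  have hNat : ∑ q ∈ range (m+3), q * (q-1) * (n₁.choose q * (n-n₁).choose (m+2-q))
      = n₁ * (n₁ - 1) * (n-2).choose m := by
    rcases le_or_gt 2 n₁ with hn2 | hn2
    · have hidx : (n₁ - 2) + (n - n₁) = n - 2 := by omega
      rw [h, hidx]
    · have hone : n₁ = 1 := by omega
      rw [h, hone]
      simp
  have hcast : ∑ q ∈ range (m+2+1), ((q : ℝ)^2 - q) * wt n n₁ (m+2) q
      = ((n₁ * (n₁-1) * (n-2).choose m : ℕ) : ℝ) := by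
    rw [← hNat, Nat.cast_sum]
    apply Finset.sum_congr rfl
    intro q _
    have hq : ((q * (q-1) : ℕ) : ℝ) = (q:ℝ)^2 - q := by
      cases q with
      | zero => simp
      | succ s => push_cast [Nat.succ_sub_one]; ring
    push_cast [wt]
    rw [← hq]
    push_cast
    ring
  rw [hcast]
  -- Nat identity: n*(n-1)*(n-2).choose m = (m+2)*(m+1)*n.choose (m+2)
  have ha := mul_choose_succ (n-1) m
  have hsub : n - 1 - 1 = n - 2 := by omega
  rw [hsub] at ha
  have hb := mul_choose_succ n (m+1)
  have hid : n * ((n-1) * (n-2).choose m) = (m+1) * ((m+2) * n.choose (m+2)) := by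
    rw [← ha, hb]; ring
  -- cast to ℝ
  have hn2 : 2 ≤ n := by omega
  have hidR : (n:ℝ) * (((n:ℝ) - 1) * ((n-2).choose m : ℝ))
      = ((m:ℝ)+1) * (((m:ℝ)+2) * (n.choose (m+2) : ℝ)) := by
    have := congrArg (fun x : ℕ => (x : ℝ)) hid
    push_cast [Nat.cast_sub (by omega : 1 ≤ n)] at this
    convert this using 2
  have ha1 : (1:ℝ) ≤ (n₁:ℝ) := by exact_mod_cast hn1
  have hab : (n₁:ℝ) ≤ (n:ℝ) := by exact_mod_cast h2
  have hb0 : (0:ℝ) < (n:ℝ) := by positivity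
  have hc0 : (0:ℝ) ≤ ((n-2).choose m : ℝ) := Nat.cast_nonneg _
  have hW0 : (0:ℝ) ≤ (n.choose (m+2) : ℝ) := Nat.cast_nonneg _
  set a := (n₁ : ℝ)
  set b := (n : ℝ)
  set c := ((n-2).choose m : ℝ)
  set W := (n.choose (m+2) : ℝ)
  have hlhs : ((n₁ * (n₁-1) * (n-2).choose m : ℕ) : ℝ) = a * (a - 1) * c := by
    push_cast [Nat.cast_sub hn1]
    ring
  rw [hlhs]
  have hkc : ((m+2 : ℕ) : ℝ) = (m:ℝ) + 2 := by push_cast; ring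
  rw [hkc]
  have hR : ((m:ℝ)+2) * (((m:ℝ)+2) - 1) * (a/b)^2 * W = (((m:ℝ)+2)*((m:ℝ)+1)*a^2*W)/b^2 := by
    rw [div_pow]; ring
  rw [hR, le_div_iff₀ (by positivity : (0:ℝ) < b^2)]
  have h9 : a^2 * (b*((b-1)*c)) = a^2*(((m:ℝ)+1)*(((m:ℝ)+2)*W)) := by rw [hidR]
  nlinarith [h9, mul_nonneg (mul_nonneg (mul_nonneg (le_trans zero_le_one ha1) (le_of_lt hb0)) hc0) (sub_nonneg.mpr hab)]

lemma arith_final (kR A s : ℝ) (hk1 : 1 ≤ kR) (hA0 : 0 ≤ A) (hs0 : 0 < s) (hs3 : s ≤ 1/3)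
    (hA1 : A ≤ 4*s) (hA2 : kR = 1 ∨ A * (kR*s) ≤ 1+2*s) :
    A ≤ 6 * Real.exp (-(1/2)) / Real.sqrt kR := by
  have hk0 : (0:ℝ) < kR := lt_of_lt_of_le zero_lt_one hk1
  have hsqk : (0:ℝ) < Real.sqrt kR := Real.sqrt_pos.mpr hk0
  have hRHS0 : (0:ℝ) ≤ 6 * Real.exp (-(1/2)) / Real.sqrt kR := by positivity
  have key : Real.exp 1 * (kR * A^2) ≤ 36 := by
    rcases hA2 with hke | hA2
    · rw [hke, one_mul]
      have hAs : A^2 ≤ 16/9 := by nlinarith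
      nlinarith [Real.exp_one_lt_d9, sq_nonneg A, Real.exp_pos 1]
    · have hprod : kR * A^2 ≤ 20/3 := by
        have h3 : A^2 * (kR*s) ≤ (4*s) * (1+2*s) := by
          have hm := mul_le_mul hA1 hA2 (by positivity) (by linarith)
          calc A^2 * (kR*s) = A * (A * (kR*s)) := by ring
            _ ≤ (4*s) * (1+2*s) := hm
        nlinarith [sq_nonneg A]
      nlinarith [Real.exp_one_lt_d9, mul_nonneg (le_of_lt hk0) (sq_nonneg A), Real.exp_pos 1]
  have hexpsq : Real.exp (-(1/2:ℝ))^2 = Real.exp (-1) := by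
    rw [sq, ← Real.exp_add]; norm_num
  have hRHS2 : (6 * Real.exp (-(1/2)) / Real.sqrt kR)^2 = 36 * Real.exp (-1) / kR := by
    rw [div_pow, mul_pow, hexpsq, Real.sq_sqrt (le_of_lt hk0)]
    norm_num
  have hA2le : A^2 ≤ (6 * Real.exp (-(1/2)) / Real.sqrt kR)^2 := by
    rw [hRHS2, Real.exp_neg, le_div_iff₀ hk0]
    have he : (0:ℝ) < Real.exp 1 := Real.exp_pos 1
    rw [mul_comm (36:ℝ) _, ← div_eq_inv_mul, le_div_iff₀ he]
    nlinarith [key]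
  have hfin := Real.sqrt_le_sqrt hA2le
  rw [Real.sqrt_sq hA0, Real.sqrt_sq hRHS0] at hfin
  linarith


set_option maxHeartbeats 1000000 in
theorem stmt7 (n n₁ k : ℕ) (hk : 1 ≤ k) (hkn : k ≤ n) (h1 : n ≤ 6 * n₁) (h2 : 2 * n₁ ≤ n)
    (p : ℝ) (hp : p = (n₁ : ℝ) / n) :
    1 + hyperTail n n₁ k ((k : ℝ) / 2) * (1 - 2 * p) / p
      ≤ 1 + 6 * Real.exp (-(1 / 2)) / Real.sqrt k := by
  have hn1 : 1 ≤ n₁ := by omega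
  have hn : 1 ≤ n := le_trans hk hkn
  have hnn : n₁ ≤ n := by omega
  have hb0 : (0:ℝ) < (n:ℝ) := by exact_mod_cast Nat.cast_pos.mpr (by omega)
  have ha0 : (0:ℝ) < (n₁:ℝ) := by exact_mod_cast Nat.cast_pos.mpr (by omega)
  have hp0 : 0 < p := by rw [hp]; positivity
  have h1R : (n:ℝ) ≤ 6 * (n₁:ℝ) := by exact_mod_cast h1
  have h2R : 2 * (n₁:ℝ) ≤ (n:ℝ) := by exact_mod_cast h2
  have hp6 : 1/6 ≤ p := by rw [hp, le_div_iff₀ hb0]; linarith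
  have hp2 : p ≤ 1/2 := by rw [hp, div_le_iff₀ hb0]; linarith
  have hW : (0:ℝ) < (n.choose k : ℝ) := by
    exact_mod_cast Nat.cast_pos.mpr (Nat.choose_pos hkn)
  have hk1 : (1:ℝ) ≤ (k:ℝ) := by exact_mod_cast hk
  have hk0 : (0:ℝ) < (k:ℝ) := lt_of_lt_of_le zero_lt_one hk1
  set W := (n.choose k : ℝ) with hWdef
  set t := ∑ q ∈ range (k+1), (if (k:ℝ)/2 ≤ (q:ℝ) then wt n n₁ k q else 0) with htdef
  clear_value W t
  have ht0 : 0 ≤ t := by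
    rw [htdef]
    apply Finset.sum_nonneg
    intro q _
    split_ifs
    · exact wt_nonneg n n₁ k q
    · exact le_refl 0
  have hT : hyperTail n n₁ k ((k:ℝ)/2) = t / W := by
    rw [htdef, hWdef, hyperTail, Finset.sum_div]
    apply Finset.sum_congr rfl
    intro q _
    split_ifs with h
    · rfl
    · simp
  have hmark : t * ((k:ℝ)/2) ≤ (k:ℝ) * p * W := by
    rw [htdef, Finset.sum_mul]
    calc ∑ q ∈ range (k+1), (if (k:ℝ)/2 ≤ (q:ℝ) then wt n n₁ k q else 0) * ((k:ℝ)/2)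
        ≤ ∑ q ∈ range (k+1), (q:ℝ) * wt n n₁ k q := by
          apply Finset.sum_le_sum
          intro q _
          split_ifs with h
          · rw [mul_comm]
            exact mul_le_mul_of_nonneg_right h (wt_nonneg n n₁ k q)
          · rw [zero_mul]
            exact mul_nonneg (Nat.cast_nonneg q) (wt_nonneg n n₁ k q)
      _ = (k:ℝ) * p * W := by rw [hWdef, S1 n n₁ k hk hkn hn1 hnn, hp]
  have hTle : t ≤ 2 * p * W := by nlinarith [hmark, hk0]
  have hsqk : (0:ℝ) < Real.sqrt k := Real.sqrt_pos.mpr hk0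
  have hRHS0 : (0:ℝ) ≤ 6 * Real.exp (-(1/2)) / Real.sqrt k := by positivity
  rcases eq_or_lt_of_le hp2 with hpe | hps
  · have : (1:ℝ) - 2 * p = 0 := by rw [hpe]; ring
    rw [this]
    simp only [mul_zero, zero_div]
    linarith
  · -- p < 1/2
    set s : ℝ := 1/2 - p with hsdef
    clear_value s
    have hs0 : 0 < s := by simp only [hsdef]; linarith
    have hs3 : s ≤ 1/3 := by simp only [hsdef]; linarith
    have h12p : (1:ℝ) - 2 * p = 2 * s := by rw [hsdef]; ring
    set A := hyperTail n n₁ k ((k:ℝ)/2) * (1 - 2*p) / p with hAdef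
    clear_value A
    have hA0 : 0 ≤ A := by
      rw [hAdef, hT]
      apply div_nonneg (mul_nonneg (div_nonneg ht0 (le_of_lt hW)) (by linarith)) (le_of_lt hp0)
    have hA1 : A ≤ 4 * s := by
      rw [hAdef, hT, h12p, div_mul_eq_mul_div, div_div, div_le_iff₀ (mul_pos hW hp0)]
      nlinarith [hTle, hs0, hW, hp0, hs3]
    have hdisj : (k:ℝ) = 1 ∨ A * ((k:ℝ)*s) ≤ 1 + 2*s := by
      rcases eq_or_lt_of_le hk1 with hke | hkg
      · exact Or.inl hke.symm
      · right
        have hk2 : 2 ≤ k := by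
          have : 1 < k := by exact_mod_cast hkg
          omega
        have hcheb : t * ((k:ℝ)*s)^2 ≤ (k:ℝ) * p * (1-p) * W := by
          have step1 : t * ((k:ℝ)*s)^2
              ≤ ∑ q ∈ range (k+1), ((q:ℝ) - (k:ℝ)*p)^2 * wt n n₁ k q := by
            rw [htdef, Finset.sum_mul]
            apply Finset.sum_le_sum
            intro q _
            split_ifs with h
            · rw [mul_comm]
              apply mul_le_mul_of_nonneg_right _ (wt_nonneg n n₁ k q)
              apply pow_le_pow_left₀ (le_of_lt (mul_pos hk0 hs0))
              simp only [hsdef]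
              ring_nf
              nlinarith [h, hk0, hp2]
            · rw [zero_mul]
              exact mul_nonneg (sq_nonneg _) (wt_nonneg n n₁ k q)
          have expand : ∑ q ∈ range (k+1), ((q:ℝ) - (k:ℝ)*p)^2 * wt n n₁ k q
              = (∑ q ∈ range (k+1), ((q:ℝ)^2 - q) * wt n n₁ k q)
                + (1 - 2*((k:ℝ)*p)) * (∑ q ∈ range (k+1), (q:ℝ) * wt n n₁ k q)
                + ((k:ℝ)*p)^2 * (∑ q ∈ range (k+1), wt n n₁ k q) := by
            rw [Finset.mul_sum, Finset.mul_sum, ← Finset.sum_add_distrib, ← Finset.sum_add_distrib]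
            apply Finset.sum_congr rfl
            intro q _
            ring
          have hS1 := S1 n n₁ k hk hkn hn1 hnn
          have hS0 := S0 n n₁ k hnn
          have hS2 := S2 n n₁ k hk2 hkn hn1 hnn
          rw [← hp] at hS1 hS2
          calc t * ((k:ℝ)*s)^2 ≤ _ := step1
            _ = _ := expand
            _ ≤ (k:ℝ)*((k:ℝ)-1)*p^2*W + (1 - 2*((k:ℝ)*p)) * ((k:ℝ)*p*W)
                + ((k:ℝ)*p)^2 * W := by
                rw [hWdef, hS1, hS0]
                exact add_le_add (add_le_add hS2 le_rfl) le_rfl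
            _ = (k:ℝ) * p * (1-p) * W := by ring
        have hA2 : A * ((k:ℝ)*s) ≤ 1 + 2*s := by
          have hTb : t / W * (2*s) / p * ((k:ℝ)*s) = (t * (2*(k:ℝ)*s*s)) / (W*p) := by
            field_simp
          rw [hAdef, hT, h12p, hTb, div_le_iff₀ (mul_pos hW hp0)]
          have h1p : ((1:ℝ) + 2*s) * (W * p) = 2*(1-p) * (W * p) := by
            rw [hsdef]; ring
          rw [h1p]
          nlinarith [hcheb, hk0, hs0, hW, hp0, ht0]
        exact hA2
    have hfin := arith_final (k:ℝ) A s hk1 hA0 hs0 hs3 hA1 hdisj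
    linarith
end
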